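/- The BFGS update of a symmetric positive definite matrix is symmetric positive definite, provided the curvature condition ⟪y, s⟫ > 0 holds. -/

import Mathlib

open Matrix

lemma vmv_mulVec {n : ℕ} (u v x : Fin n → ℝ) : vecMulVec u v *ᵥ x = (v ⬝ᵥ x) • u := by
  funext i
  simp [vecMulVec_apply, mulVec, dotProduct, Finset.mul_sum, mul_comm, mul_assoc, mul_left_comm]

lemma vmv_herm {n : ℕ} (u : Fin n → ℝ) : (vecMulVec u u).IsHermitian := by
  ext i j
  simp [conjTranspose_apply, vecMulVec_apply, mul_comm]

lemma herm_smul {n : ℕ} (r : ℝ) {M : Matrix (Fin n) (Fin n) ℝ} (h : M.IsHermitian) :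
    (r • M).IsHermitian := by
  rw [Matrix.IsHermitian, conjTranspose_smul, h, star_trivial]

theorem bfgs_posdef {n : ℕ} (B : Matrix (Fin n) (Fin n) ℝ) (hB : B.PosDef)
    (s y : Fin n → ℝ) (hs : s ≠ 0) (hcurv : y ⬝ᵥ s > 0) :
    (B - (1 / (s ⬝ᵥ B.mulVec s)) • Matrix.vecMulVec (B.mulVec s) (B.mulVec s)
      + (1 / (y ⬝ᵥ s)) • Matrix.vecMulVec y y).PosDef := by
  have hBs := hB.1
  have ha : 0 < s ⬝ᵥ B *ᵥ s := by simpa using (posDef_iff_dotProduct_mulVec.mp hB).2 hs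
  set a := s ⬝ᵥ B *ᵥ s with hadef
  set c := y ⬝ᵥ s with hcdef
  -- symmetry of B-form
  have hsym : ∀ u v : Fin n → ℝ, u ⬝ᵥ B *ᵥ v = v ⬝ᵥ B *ᵥ u := by
    intro u v
    rw [dotProduct_mulVec, ← mulVec_transpose]
    rw [show Bᵀ = B from hBs, dotProduct_comm]
  rw [posDef_iff_dotProduct_mulVec]
  constructor
  · exact (hBs.sub (herm_smul _ (vmv_herm (B *ᵥ s)))).add (herm_smul _ (vmv_herm y))
  intro x hx
  have hq : star x ⬝ᵥ ((B - (1 / a) • vecMulVec (B *ᵥ s) (B *ᵥ s)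
      + (1 / c) • vecMulVec y y) *ᵥ x)
      = x ⬝ᵥ B *ᵥ x - (1/a) * (x ⬝ᵥ B *ᵥ s)^2 + (1/c) * (y ⬝ᵥ x)^2 := by
    rw [add_mulVec, sub_mulVec, smul_mulVec, smul_mulVec, vmv_mulVec, vmv_mulVec]
    simp only [star_trivial, dotProduct_add, dotProduct_sub, dotProduct_smul, smul_eq_mul,
      smul_smul]
    rw [dotProduct_comm (B *ᵥ s) x, dotProduct_comm x y, hsym x s]
    ring
  rw [hq]
  set t := (x ⬝ᵥ B *ᵥ s) / a with htdef
  set z := x - t • s with hzdef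
  have hz : z ⬝ᵥ B *ᵥ z = x ⬝ᵥ B *ᵥ x - (1/a) * (x ⬝ᵥ B *ᵥ s)^2 := by
    rw [hzdef, sub_dotProduct, mulVec_sub, dotProduct_sub, dotProduct_sub,
      mulVec_smul, dotProduct_smul, smul_dotProduct, smul_dotProduct, dotProduct_smul,
      smul_eq_mul, smul_eq_mul, smul_eq_mul, smul_eq_mul, hsym s x, htdef]
    field_simp
    ring
  by_cases hz0 : z = 0
  · -- x = t • s, t ≠ 0
    have hxts : x = t • s := by rw [← sub_eq_zero]; exact hz0
    have ht : t ≠ 0 := by intro ht0; rw [ht0] at hxts; simp at hxts; exact hx hxts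
    have hyx : y ⬝ᵥ x = t * c := by rw [hxts, dotProduct_smul, smul_eq_mul, hcdef]
    have : x ⬝ᵥ B *ᵥ x - (1/a) * (x ⬝ᵥ B *ᵥ s)^2 = 0 := by rw [← hz, hz0]; simp
    rw [this, hyx, zero_add]
    have : (1/c) * (t*c)^2 = t^2 * c := by field_simp
    rw [this]
    positivity
  · have h1 : 0 < z ⬝ᵥ B *ᵥ z := by simpa using (posDef_iff_dotProduct_mulVec.mp hB).2 hz0
    have h2 : 0 ≤ (1/c) * (y ⬝ᵥ x)^2 := by positivity
    rw [← hz]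
    linarith
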